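/- arXiv:2512.20599 — 2 statements merged into one kernel-verified Lean document; each statement's English description precedes it below -/
import Mathlib

section
/- Polynomial method for channel distinguishing (algebraic core of Theorem 4.3): Let d_A, d_B, r, n, M be positive integers. For each x ∈ Fin M, let K x : Fin r → Matrix (Fin d_B) (Fin d_A) ℂ be a family of Kraus operators, and let the channel tensor Φ_x : (Fin d_A × Fin d_A × Fin d_B × Fin d_B) → ℂ be defined by Φ_x (i, i', o, o') = ∑_{k : Fin r} (K x k) o i · conj((K x k) o' i'). Suppose that for each x̂ ∈ Fin M there is an algorithm tensor T x̂ : (Fin n → (Fin d_A × Fin d_A × Fin d_B × Fin d_B)) → ℂ, and define P x̂ x := ∑_{s : Fin n → (Fin d_A × Fin d_A × Fin d_B × Fin d_B)} T x̂ s · ∏_{j : Fin n} Φ_x (s j). Assume that every P x̂ x is real with nonnegative real part, that ∑_{x̂ : Fin M} P x̂ x = 1 for every x, and that Re(P x x) > 1/2 for every x. Then M ≤ (Nat.choose (n + r·d_A·d_B − 1) n)^2. -/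
open scoped BigOperators ComplexConjugate

/-- Auxiliary: factoring a sum through the fibers of a map `g`. -/
lemma pmcd_aux_fac {α β : Type*} [Fintype α] [DecidableEq β] [Fintype β]
    (g : α → β) (t : α → ℂ) (u : β → ℂ) :
    ∑ a, t a * u (g a) =
      ∑ b, (∑ a ∈ Finset.univ.filter (fun a => g a = b), t a) * u b := by
  rw [← Finset.sum_fiberwise_of_maps_to (fun a (_ : a ∈ Finset.univ) => Finset.mem_univ (g a))
    (fun a => t a * u (g a))]
  refine Finset.sum_congr rfl fun b _ => ?_
  rw [Finset.sum_mul]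
  exact Finset.sum_congr rfl fun a ha => by rw [(Finset.mem_filter.mp ha).2]

/-- Auxiliary: a square matrix with nonzero determinant admitting a factorization through
a finite index type `ι` has at most `card ι` rows. -/
lemma pmcd_aux_rank {M : ℕ} {ι : Type*} [Fintype ι] [DecidableEq ι]
    (Pm : Matrix (Fin M) (Fin M) ℂ) (Cm : Matrix (Fin M) ι ℂ) (Um : Matrix ι (Fin M) ℂ)
    (hfac : Pm = Cm * Um) (hdet : Pm.det ≠ 0) : M ≤ Fintype.card ι := by
  have h1 : Pm.rank = M := by
    rw [Matrix.rank_of_isUnit _ ((Matrix.isUnit_iff_isUnit_det _).mpr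
      (isUnit_iff_ne_zero.mpr hdet))]
    simp
  calc M = Pm.rank := h1.symm
    _ ≤ Cm.rank := by rw [hfac]; exact Matrix.rank_mul_le_left _ _
    _ ≤ Fintype.card ι := Cm.rank_le_card_width

/-- **Polynomial method for channel distinguishing** (algebraic core of Theorem 4.3).
Any quantum algorithm (even with indefinite causal order) making `n` queries to a
channel with `r` Kraus operators produces measurement probabilities that are
contractions of an algorithm tensor with `n` copies of the channel tensor; if these
probabilities form a column-stochastic confusion matrix whose diagonal entries all
exceed `1/2`, then `M ≤ (choose (n + r·d_A·d_B − 1) n)^2`. -/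
theorem polynomial_method_channel_distinguishing
    (dA dB r n M : ℕ) (hdA : 0 < dA) (hdB : 0 < dB) (hr : 0 < r) (hn : 0 < n)
    (hM : 0 < M)
    (K : Fin M → Fin r → Matrix (Fin dB) (Fin dA) ℂ)
    (Φ : Fin M → (Fin dA × Fin dA × Fin dB × Fin dB) → ℂ)
    (hΦ : ∀ (x : Fin M) (i i' : Fin dA) (o o' : Fin dB),
      Φ x (i, i', o, o') = ∑ k : Fin r, (K x k) o i * conj ((K x k) o' i'))
    (T : Fin M → ((Fin n → (Fin dA × Fin dA × Fin dB × Fin dB)) → ℂ))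
    (P : Fin M → Fin M → ℂ)
    (hP : ∀ xh x : Fin M,
      P xh x = ∑ s : Fin n → (Fin dA × Fin dA × Fin dB × Fin dB),
        T xh s * ∏ j : Fin n, Φ x (s j))
    (hreal : ∀ xh x : Fin M, (P xh x).im = 0)
    (hnonneg : ∀ xh x : Fin M, 0 ≤ (P xh x).re)
    (hsum : ∀ x : Fin M, ∑ xh : Fin M, P xh x = 1)
    (hdiag : ∀ x : Fin M, 1 / 2 < (P x x).re) :
    M ≤ (Nat.choose (n + r * dA * dB - 1) n) ^ 2 := by
  classical
  -- the "vectorized" Kraus entries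
  set E := (Fin r × Fin dB × Fin dA) with hE
  let v : Fin M → E → ℂ := fun x e => K x e.1 e.2.1 e.2.2
  -- symmetric index type
  let ι : Type := Sym E n
  -- monomial value on a multiset of indices
  let F : Fin M → ι → ℂ := fun x μ => ((μ : Multiset E).map (v x)).prod
  -- the map sending (s, κ) to the pair of multisets of indices
  let S := (Fin n → Fin dA × Fin dA × Fin dB × Fin dB)
  let g : S × (Fin n → Fin r) → ι × ι := fun q =>
    (⟨Multiset.map (fun j => ((q.2 j, (q.1 j).2.2.1, (q.1 j).1) : E)) Finset.univ.val,
        by simp⟩,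
     ⟨Multiset.map (fun j => ((q.2 j, (q.1 j).2.2.2, (q.1 j).2.1) : E)) Finset.univ.val,
        by simp⟩)
  let Umat : Matrix (ι × ι) (Fin M) ℂ := fun p x => F x p.1 * conj (F x p.2)
  let Cmat : Matrix (Fin M) (ι × ι) ℂ := fun xh p =>
    ∑ q ∈ Finset.univ.filter (fun q => g q = p), T xh q.1
  let Pmat : Matrix (Fin M) (Fin M) ℂ := Matrix.of P
  -- the factorization
  have hΦ' : ∀ (x : Fin M) (e : Fin dA × Fin dA × Fin dB × Fin dB),
      Φ x e = ∑ k : Fin r, v x (k, e.2.2.1, e.1) * conj (v x (k, e.2.2.2, e.2.1)) := by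
    rintro x ⟨i, i', o, o'⟩
    exact hΦ x i i' o o'
  have hfac : Pmat = Cmat * Umat := by
    ext xh x
    rw [Matrix.mul_apply]
    show P xh x = ∑ p : ι × ι, Cmat xh p * Umat p x
    rw [← pmcd_aux_fac g (fun q => T xh q.1) (fun p => Umat p x)]
    rw [hP, Fintype.sum_prod_type]
    refine Finset.sum_congr rfl fun s _ => ?_
    have key : (∏ j : Fin n, Φ x (s j)) = ∑ κ : Fin n → Fin r, Umat (g (s, κ)) x := by
      have h1 : (∏ j : Fin n, Φ x (s j)) = ∏ j : Fin n, ∑ k : Fin r,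
          v x (k, (s j).2.2.1, (s j).1) * conj (v x (k, (s j).2.2.2, (s j).2.1)) :=
        Finset.prod_congr rfl fun j _ => hΦ' x (s j)
      rw [h1, Fintype.prod_sum]
      refine Finset.sum_congr rfl fun κ _ => ?_
      rw [Finset.prod_mul_distrib, ← map_prod]
      show _ = F x (g (s, κ)).1 * conj (F x (g (s, κ)).2)
      simp only [F, g, Sym.coe_mk, Multiset.map_map, Function.comp_def]
      rfl
    rw [key, Finset.mul_sum]
  -- entries are real and nonnegative
  have hPc : ∀ xh x, P xh x = ((P xh x).re : ℂ) := by
    intro xh x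
    simp [Complex.ext_iff, hreal]
  have hnorm : ∀ xh x, ‖P xh x‖ = (P xh x).re := by
    intro xh x
    conv_lhs => rw [hPc xh x]
    rw [Complex.norm_real, Real.norm_eq_abs, abs_of_nonneg (hnonneg xh x)]
  -- column sums of the real parts are 1
  have hre_sum : ∀ x, ∑ xh, (P xh x).re = 1 := by
    intro x
    have := congrArg Complex.re (hsum x)
    simpa [Complex.re_sum] using this
  -- strict column diagonal dominance
  have hdom : ∀ x : Fin M, ∑ xh ∈ Finset.univ.erase x, ‖Pmat xh x‖ < ‖Pmat x x‖ := by
    intro x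
    show ∑ xh ∈ Finset.univ.erase x, ‖P xh x‖ < ‖P x x‖
    simp only [hnorm]
    rw [Finset.sum_erase_eq_sub (Finset.mem_univ x), hre_sum x]
    have h := hdiag x
    linarith
  have hdet : Pmat.det ≠ 0 := det_ne_zero_of_sum_col_lt_diag hdom
  have hle : M ≤ Fintype.card (ι × ι) := pmcd_aux_rank Pmat Cmat Umat hfac hdet
  -- compute the cardinality
  have hcard : Fintype.card (ι × ι) = (Nat.choose (n + r * dA * dB - 1) n) ^ 2 := by
    rw [Fintype.card_prod]
    have hι : Fintype.card ι = Nat.choose (n + r * dA * dB - 1) n := by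
      show Fintype.card (Sym E n) = _
      rw [Sym.card_sym_eq_choose]
      congr 1
      have h1 : Fintype.card E = r * dA * dB := by
        simp [hE, Fintype.card_prod]
        ring
      rw [h1]
      omega
    rw [hι, sq]
  rwa [hcard] at hle
end

section
/- Lemma 4.8 (binomial coefficient bound via the bosonic entropy function): Let n and d be natural numbers with n ≥ 1 and d ≥ 2, and let c > 0 be a real number. If Real.logb 2 (Nat.choose (n + d − 1) n) ≥ c · (d − 1), then, setting x := (n : ℝ) / (d − 1), it holds that g(x) ≥ c, where g is the bosonic entropy function g(x) = (1 + x) · Real.logb 2 (1 + x) − x · Real.logb 2 x. -/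
/-- The bosonic entropy function `g(x) = (1 + x)·logb₂(1 + x) − x·logb₂(x)`. -/
noncomputable def bosonicEntropy (x : ℝ) : ℝ :=
  (1 + x) * Real.logb 2 (1 + x) - x * Real.logb 2 x

private lemma choose_mul_le (n b : ℕ) :
    ((n + b).choose n : ℝ) * (n : ℝ) ^ n * (b : ℝ) ^ b ≤ ((n : ℝ) + b) ^ (n + b) := by
  have hpow := add_pow (n : ℝ) (b : ℝ) (n + b)
  have hmem : n ∈ Finset.range (n + b + 1) := by
    simp [Nat.lt_succ_iff, Nat.le_add_right]
  have hle := Finset.single_le_sum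
    (f := fun k => (n : ℝ) ^ k * (b : ℝ) ^ (n + b - k) * ((n + b).choose k : ℝ))
    (fun i _ => by positivity) hmem
  simp only [Nat.add_sub_cancel_left] at hle
  rw [hpow]
  nlinarith [hle]

/-- **Lemma 4.8** (binomial coefficient bound via the bosonic entropy function):
if `logb₂ (choose (n + d − 1) n) ≥ c·(d − 1)` with `n ≥ 1`, `d ≥ 2` and `c > 0`,
then `g(n / (d − 1)) ≥ c` where `g` is the bosonic entropy function. -/
theorem bosonicEntropy_ge_of_logb_choose_ge
    (n d : ℕ) (hn : 1 ≤ n) (hd : 2 ≤ d) (c : ℝ) (hc : 0 < c)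
    (h : c * ((d : ℝ) - 1) ≤ Real.logb 2 (Nat.choose (n + d - 1) n)) :
    c ≤ bosonicEntropy ((n : ℝ) / ((d : ℝ) - 1)) := by
  set b := d - 1 with hb
  have hb1 : 1 ≤ b := by omega
  have hbd : (d : ℝ) - 1 = (b : ℝ) := by
    have : d = b + 1 := by omega
    rw [this]; push_cast; ring
  have hnd : n + d - 1 = n + b := by omega
  rw [hnd] at h; rw [hbd] at h ⊢
  have hnpos : (0 : ℝ) < n := by exact_mod_cast hn
  have hbpos : (0 : ℝ) < b := by exact_mod_cast hb1
  have hmpos : (0 : ℝ) < (n : ℝ) + b := by positivity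
  have hCpos : (0 : ℝ) < ((n + b).choose n : ℝ) := by
    exact_mod_cast Nat.choose_pos (Nat.le_add_right n b)
  -- key log bound
  have key : Real.logb 2 ((n + b).choose n) ≤
      ((n : ℝ) + b) * Real.logb 2 ((n : ℝ) + b)
        - (n : ℝ) * Real.logb 2 n - (b : ℝ) * Real.logb 2 b := by
    have hle : ((n + b).choose n : ℝ) ≤
        ((n : ℝ) + b) ^ (n + b) / ((n : ℝ) ^ n * (b : ℝ) ^ b) := by
      rw [le_div_iff₀ (by positivity)]
      have := choose_mul_le n b
      nlinarith [this]
    have hlog := Real.logb_le_logb_of_le (b := 2) one_lt_two hCpos hle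
    calc Real.logb 2 ((n + b).choose n) ≤ _ := hlog
      _ = _ := by
        rw [Real.logb_div (by positivity) (by positivity),
          Real.logb_mul (by positivity) (by positivity),
          Real.logb_pow, Real.logb_pow, Real.logb_pow]
        push_cast
        ring
  -- rewrite bosonic entropy
  have hbe : bosonicEntropy ((n : ℝ) / b) * b =
      ((n : ℝ) + b) * Real.logb 2 ((n : ℝ) + b)
        - (n : ℝ) * Real.logb 2 n - (b : ℝ) * Real.logb 2 b := by
    unfold bosonicEntropy
    have h1 : 1 + (n : ℝ) / b = ((n : ℝ) + b) / b := by
      field_simp; ring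
    rw [h1, Real.logb_div (by positivity) (by positivity),
      Real.logb_div (by positivity) (by positivity)]
    field_simp
    ring
  have : c * b ≤ bosonicEntropy ((n : ℝ) / b) * b := by
    rw [hbe]; exact le_trans h key
  exact le_of_mul_le_mul_right this hbpos
end
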